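/- Fix N ∈ ℕ and x_A, x_B ∈ (0,1). Let (M_i), (K_{A,i}), (K_{B,i}) be sequences of naturals with K_{A,i} ≤ M_i, K_{B,i} ≤ M_i, M_i → ∞, (K_{A,i}:ℝ)/M_i → x_A and (K_{B,i}:ℝ)/M_i → x_B. For each i let ΔG_i(P) = Σ_{k=0}^{N} [ P·p^i_k(A)·log(P·p^i_k(A)/(P·p^i_k(A)+(1−P)·p^i_k(B))) + (1−P)·p^i_k(B)·log((1−P)·p^i_k(B)/(P·p^i_k(A)+(1−P)·p^i_k(B))) ] built from the hypergeometric weights p^i_k(θ) = (C(K_{θ,i},k)·C(M_i−K_{θ,i}, N−k))/C(M_i,N) (summands with vanishing leading factor read as 0), and let ΔG_bin(P) be the analogous function built from the binomial weights p_k(θ) = C(N,k)·x_θ^k·(1−x_θ)^{N−k}. Then ΔG_bin has a unique minimizer P* ∈ (0,1); for all sufficiently large i, ΔG_i has a unique minimizer P_i ∈ (0,1); and P_i → P* as i → ∞. -/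

import Mathlib

open Filter

/-- Hypergeometric weight: probability of `k` ones in a uniform `N`-sample from a
length-`M` binary sequence with `K` ones. -/
noncomputable def hypWeight (M K N k : ℕ) : ℝ :=
  ((K.choose k : ℝ) * ((M - K).choose (N - k) : ℝ)) / (M.choose N : ℝ)

/-- Binomial weight: probability that a `Binomial(N,x)` variable equals `k`. -/
noncomputable def binWeight (N : ℕ) (x : ℝ) (k : ℕ) : ℝ :=
  (N.choose k : ℝ) * x ^ k * (1 - x) ^ (N - k)

/-- The growth-rate difference of the Bayesian game built from the weight vectors
`pA`, `pB` (summands with vanishing leading factor are `0` automatically). -/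
noncomputable def DeltaG (N : ℕ) (pA pB : ℕ → ℝ) (P : ℝ) : ℝ :=
  ∑ k ∈ Finset.range (N + 1),
    (P * pA k * Real.log (P * pA k / (P * pA k + (1 - P) * pB k))
      + (1 - P) * pB k * Real.log ((1 - P) * pB k / (P * pA k + (1 - P) * pB k)))

/-- `P` is the unique (strict) minimizer of `f` on `(0,1)`. -/
def IsUniqueArgminOnIoo (f : ℝ → ℝ) (P : ℝ) : Prop :=
  P ∈ Set.Ioo (0:ℝ) 1 ∧ ∀ Q ∈ Set.Ioo (0:ℝ) 1, Q ≠ P → f P < f Q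

set_option linter.unusedSectionVars false
set_option linter.unusedVariables false
set_option maxHeartbeats 1000000

namespace S19

open Set

/-- The derivative of `DeltaG` on `(0,1)` (for positive weight vectors). -/
noncomputable def phiFn (N : ℕ) (a b : ℕ → ℝ) (P : ℝ) : ℝ :=
  ∑ k ∈ Finset.range (N + 1),
    (a k * (Real.log (P * a k) - Real.log (P * a k + (1 - P) * b k))
      - b k * (Real.log ((1 - P) * b k) - Real.log (P * a k + (1 - P) * b k)))

lemma m_pos {a b P : ℝ} (ha : 0 < a) (hb : 0 < b) (hP : P ∈ Set.Ioo (0:ℝ) 1) :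
    0 < P * a + (1 - P) * b :=
  add_pos (mul_pos hP.1 ha) (mul_pos (sub_pos.2 hP.2) hb)

section term

variable {a b P : ℝ} (ha : 0 < a) (hb : 0 < b) (hP : P ∈ Set.Ioo (0:ℝ) 1)

lemma hasDerivAt_m : HasDerivAt (fun Q : ℝ => Q * a + (1 - Q) * b) (a - b) P := by
  have h1 : HasDerivAt (fun Q : ℝ => Q * a) (1 * a) P := (hasDerivAt_id P).mul_const a
  have h2 : HasDerivAt (fun Q : ℝ => (1 - Q) * b) ((0 - 1) * b) P :=
    ((hasDerivAt_const P (1:ℝ)).sub (hasDerivAt_id P)).mul_const b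
  have := h1.fun_add h2
  exact this.congr_deriv (by ring)

include ha hb hP

lemma hasDerivAt_logm :
    HasDerivAt (fun Q : ℝ => Real.log (Q * a + (1 - Q) * b))
      ((a - b) / (P * a + (1 - P) * b)) P :=
  (hasDerivAt_m (a := a) (b := b)).log (m_pos ha hb hP).ne'

lemma hasDerivAt_log1 :
    HasDerivAt (fun Q : ℝ => Real.log (Q * a)) (1 * a / (P * a)) P :=
  ((hasDerivAt_id P).mul_const a).log (mul_pos hP.1 ha).ne'

lemma hasDerivAt_log2 :
    HasDerivAt (fun Q : ℝ => Real.log ((1 - Q) * b)) ((0 - 1) * b / ((1 - P) * b)) P :=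
  (((hasDerivAt_const P (1:ℝ)).sub (hasDerivAt_id P)).mul_const b).log
    (mul_pos (sub_pos.2 hP.2) hb).ne'

/-- derivative of one clean summand of `DeltaG`. -/
lemma hasDerivAt_term :
    HasDerivAt (fun Q : ℝ =>
        Q * a * (Real.log (Q * a) - Real.log (Q * a + (1 - Q) * b))
          + (1 - Q) * b * (Real.log ((1 - Q) * b) - Real.log (Q * a + (1 - Q) * b)))
      (a * (Real.log (P * a) - Real.log (P * a + (1 - P) * b))
        - b * (Real.log ((1 - P) * b) - Real.log (P * a + (1 - P) * b))) P := by
  have hm := m_pos ha hb hP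
  have h1 : HasDerivAt (fun Q : ℝ => Q * a) (1 * a) P := (hasDerivAt_id P).mul_const a
  have h2 : HasDerivAt (fun Q : ℝ => (1 - Q) * b) ((0 - 1) * b) P :=
    ((hasDerivAt_const P (1:ℝ)).sub (hasDerivAt_id P)).mul_const b
  have hd :=
    (h1.fun_mul ((hasDerivAt_log1 ha hb hP).fun_sub (hasDerivAt_logm ha hb hP))).fun_add
      (h2.fun_mul ((hasDerivAt_log2 ha hb hP).fun_sub (hasDerivAt_logm ha hb hP)))
  refine hd.congr_deriv ?_
  have hPa : P * a ≠ 0 := (mul_pos hP.1 ha).ne'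
  have hPb : (1 - P) * b ≠ 0 := (mul_pos (sub_pos.2 hP.2) hb).ne'
  have hP0 : P ≠ 0 := hP.1.ne'
  have hP1 : (1:ℝ) - P ≠ 0 := (sub_pos.2 hP.2).ne'
  have hm' := hm.ne'
  have ha' := ha.ne'
  have hb' := hb.ne'
  generalize hmdef : P * a + (1 - P) * b = m at hm' ⊢
  field_simp
  linear_combination (b - a) * hmdef

/-- derivative of one summand of `phiFn`. -/
lemma hasDerivAt_psi :
    HasDerivAt (fun Q : ℝ =>
        a * (Real.log (Q * a) - Real.log (Q * a + (1 - Q) * b))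
          - b * (Real.log ((1 - Q) * b) - Real.log (Q * a + (1 - Q) * b)))
      (a * b / (P * (1 - P) * (P * a + (1 - P) * b))) P := by
  have hm := m_pos ha hb hP
  have hd :=
    (((hasDerivAt_log1 ha hb hP).fun_sub (hasDerivAt_logm ha hb hP)).const_mul a).fun_sub
      (((hasDerivAt_log2 ha hb hP).fun_sub (hasDerivAt_logm ha hb hP)).const_mul b)
  refine hd.congr_deriv ?_
  have hP0 : P ≠ 0 := hP.1.ne'
  have hP1 : (1:ℝ) - P ≠ 0 := (sub_pos.2 hP.2).ne'
  have hm' := hm.ne'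
  have ha' := ha.ne'
  have hb' := hb.ne'
  generalize hmdef : P * a + (1 - P) * b = m at hm' ⊢
  field_simp
  linear_combination (-(a * (1 - P) + b * P)) * hmdef

end term

variable {N : ℕ} {a b : ℕ → ℝ}

section sums

variable (ha : ∀ k ∈ Finset.range (N + 1), 0 < a k)
  (hb : ∀ k ∈ Finset.range (N + 1), 0 < b k)

include ha hb

lemma hasDerivAt_DeltaG {P : ℝ} (hP : P ∈ Set.Ioo (0:ℝ) 1) :
    HasDerivAt (DeltaG N a b) (phiFn N a b P) P := by
  have hclean : HasDerivAt (fun Q : ℝ => ∑ k ∈ Finset.range (N + 1),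
      (Q * a k * (Real.log (Q * a k) - Real.log (Q * a k + (1 - Q) * b k))
        + (1 - Q) * b k * (Real.log ((1 - Q) * b k) - Real.log (Q * a k + (1 - Q) * b k))))
      (phiFn N a b P) P :=
    HasDerivAt.fun_sum fun k hk => hasDerivAt_term (ha k hk) (hb k hk) hP
  refine hclean.congr_of_eventuallyEq ?_
  filter_upwards [isOpen_Ioo.mem_nhds hP] with Q hQ
  refine Finset.sum_congr rfl fun k hk => ?_
  rw [Real.log_div (mul_pos hQ.1 (ha k hk)).ne' (m_pos (ha k hk) (hb k hk) hQ).ne',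
    Real.log_div (mul_pos (sub_pos.2 hQ.2) (hb k hk)).ne' (m_pos (ha k hk) (hb k hk) hQ).ne']

lemma hasDerivAt_phiFn {P : ℝ} (hP : P ∈ Set.Ioo (0:ℝ) 1) :
    HasDerivAt (phiFn N a b)
      (∑ k ∈ Finset.range (N + 1), a k * b k / (P * (1 - P) * (P * a k + (1 - P) * b k))) P :=
  HasDerivAt.fun_sum fun k hk => hasDerivAt_psi (ha k hk) (hb k hk) hP

lemma strictMonoOn_phiFn : StrictMonoOn (phiFn N a b) (Set.Ioo 0 1) := by
  refine strictMonoOn_of_deriv_pos (convex_Ioo 0 1)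
    (fun P hP => ((hasDerivAt_phiFn ha hb hP).continuousAt).continuousWithinAt) ?_
  rw [interior_Ioo]
  intro P hP
  rw [(hasDerivAt_phiFn ha hb hP).deriv]
  refine Finset.sum_pos (fun k hk => div_pos (mul_pos (ha k hk) (hb k hk))
    (mul_pos (mul_pos hP.1 (sub_pos.2 hP.2)) (m_pos (ha k hk) (hb k hk) hP))) ?_
  exact Finset.nonempty_range_add_one

lemma exists_phiFn_neg : ∃ u ∈ Set.Ioo (0:ℝ) 1, phiFn N a b u < 0 := by
  set l : Filter ℝ := nhdsWithin 0 (Set.Ioi 0) with hl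
  have hSA : 0 < ∑ k ∈ Finset.range (N + 1), a k :=
    Finset.sum_pos ha Finset.nonempty_range_add_one
  -- decomposition
  have hEq : ∀ P ∈ Set.Ioo (0:ℝ) 1, phiFn N a b P =
      Real.log P * (∑ k ∈ Finset.range (N + 1), a k) +
        ∑ k ∈ Finset.range (N + 1),
          (a k * (Real.log (a k) - Real.log (P * a k + (1 - P) * b k))
            - b k * (Real.log ((1 - P) * b k) - Real.log (P * a k + (1 - P) * b k))) := by
    intro P hP
    rw [Finset.mul_sum, ← Finset.sum_add_distrib]
    refine Finset.sum_congr rfl fun k hk => ?_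
    rw [Real.log_mul hP.1.ne' (ha k hk).ne']
    ring
  -- the remainder converges
  have hrem : Tendsto (fun P : ℝ => ∑ k ∈ Finset.range (N + 1),
      (a k * (Real.log (a k) - Real.log (P * a k + (1 - P) * b k))
        - b k * (Real.log ((1 - P) * b k) - Real.log (P * a k + (1 - P) * b k)))) l
      (nhds (∑ k ∈ Finset.range (N + 1),
        (a k * (Real.log (a k) - Real.log (b k)) - b k * (Real.log (b k) - Real.log (b k))))) := by
    refine tendsto_finset_sum _ fun k hk => ?_
    have hmk : Tendsto (fun P : ℝ => P * a k + (1 - P) * b k) l (nhds (b k)) := by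
      have : Tendsto (fun P : ℝ => P * a k + (1 - P) * b k) (nhds 0)
          (nhds (0 * a k + (1 - 0) * b k)) := by
        exact ((continuous_id.mul continuous_const).add
          ((continuous_const.sub continuous_id).mul continuous_const)).tendsto 0
      simpa using this.mono_left nhdsWithin_le_nhds
    have hlogm : Tendsto (fun P : ℝ => Real.log (P * a k + (1 - P) * b k)) l
        (nhds (Real.log (b k))) :=
      ((Real.continuousAt_log (hb k hk).ne').tendsto).comp hmk
    have h1b : Tendsto (fun P : ℝ => (1 - P) * b k) l (nhds (b k)) := by
      have : Tendsto (fun P : ℝ => (1 - P) * b k) (nhds 0) (nhds ((1 - 0) * b k)) :=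
        ((continuous_const.sub continuous_id).mul continuous_const).tendsto 0
      simpa using this.mono_left nhdsWithin_le_nhds
    have hlog1b : Tendsto (fun P : ℝ => Real.log ((1 - P) * b k)) l (nhds (Real.log (b k))) :=
      ((Real.continuousAt_log (hb k hk).ne').tendsto).comp h1b
    exact ((tendsto_const_nhds.mul (tendsto_const_nhds.sub hlogm))).sub
      (tendsto_const_nhds.mul (hlog1b.sub hlogm))
  have hmain : Tendsto (fun P : ℝ => Real.log P * (∑ k ∈ Finset.range (N + 1), a k)) l atBot :=
    Filter.Tendsto.atBot_mul_pos hSA Real.tendsto_log_nhdsGT_zero tendsto_const_nhds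
  have hg : Tendsto (fun P : ℝ => Real.log P * (∑ k ∈ Finset.range (N + 1), a k) +
      ∑ k ∈ Finset.range (N + 1),
        (a k * (Real.log (a k) - Real.log (P * a k + (1 - P) * b k))
          - b k * (Real.log ((1 - P) * b k) - Real.log (P * a k + (1 - P) * b k)))) l atBot := by
    refine Filter.tendsto_atBot_add_right_of_ge' l
      ((∑ k ∈ Finset.range (N + 1),
        (a k * (Real.log (a k) - Real.log (b k)) - b k * (Real.log (b k) - Real.log (b k)))) + 1)
      hmain ?_
    exact hrem.eventually (eventually_le_nhds (lt_add_one _))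
  have hev : ∀ᶠ P in l, phiFn N a b P < 0 ∧ P ∈ Set.Ioo (0:ℝ) 1 := by
    have hIoo : ∀ᶠ P in l, P ∈ Set.Ioo (0:ℝ) 1 := by
      have h1 : ∀ᶠ P in l, P ∈ Set.Ioi (0:ℝ) := self_mem_nhdsWithin
      have h2 : ∀ᶠ P in l, P < 1 :=
        (eventually_lt_nhds one_pos).filter_mono nhdsWithin_le_nhds
      filter_upwards [h1, h2] with P hP1 hP2 using ⟨hP1, hP2⟩
    have hneg := hg.eventually (eventually_lt_atBot 0)
    filter_upwards [hIoo, hneg] with P h1 h2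
    exact ⟨by rw [hEq P h1]; exact h2, h1⟩
  obtain ⟨u, hu1, hu2⟩ := hev.exists
  exact ⟨u, hu2, hu1⟩

lemma exists_phiFn_pos : ∃ v ∈ Set.Ioo (0:ℝ) 1, 0 < phiFn N a b v := by
  set l : Filter ℝ := nhdsWithin 1 (Set.Iio 1) with hl
  have hSB : 0 < ∑ k ∈ Finset.range (N + 1), b k :=
    Finset.sum_pos hb Finset.nonempty_range_add_one
  have hEq : ∀ P ∈ Set.Ioo (0:ℝ) 1, phiFn N a b P =
      (-Real.log (1 - P)) * (∑ k ∈ Finset.range (N + 1), b k) +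
        ∑ k ∈ Finset.range (N + 1),
          (a k * (Real.log (P * a k) - Real.log (P * a k + (1 - P) * b k))
            - b k * (Real.log (b k) - Real.log (P * a k + (1 - P) * b k))) := by
    intro P hP
    rw [Finset.mul_sum, ← Finset.sum_add_distrib]
    refine Finset.sum_congr rfl fun k hk => ?_
    rw [Real.log_mul (sub_pos.2 hP.2).ne' (hb k hk).ne']
    ring
  have hrem : Tendsto (fun P : ℝ => ∑ k ∈ Finset.range (N + 1),
      (a k * (Real.log (P * a k) - Real.log (P * a k + (1 - P) * b k))
        - b k * (Real.log (b k) - Real.log (P * a k + (1 - P) * b k)))) l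
      (nhds (∑ k ∈ Finset.range (N + 1),
        (a k * (Real.log (a k) - Real.log (a k)) - b k * (Real.log (b k) - Real.log (a k))))) := by
    refine tendsto_finset_sum _ fun k hk => ?_
    have hmk : Tendsto (fun P : ℝ => P * a k + (1 - P) * b k) l (nhds (a k)) := by
      have : Tendsto (fun P : ℝ => P * a k + (1 - P) * b k) (nhds 1)
          (nhds (1 * a k + (1 - 1) * b k)) :=
        ((continuous_id.mul continuous_const).add
          ((continuous_const.sub continuous_id).mul continuous_const)).tendsto 1
      simpa using this.mono_left nhdsWithin_le_nhds
    have hlogm : Tendsto (fun P : ℝ => Real.log (P * a k + (1 - P) * b k)) l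
        (nhds (Real.log (a k))) :=
      ((Real.continuousAt_log (ha k hk).ne').tendsto).comp hmk
    have hpa : Tendsto (fun P : ℝ => P * a k) l (nhds (a k)) := by
      have : Tendsto (fun P : ℝ => P * a k) (nhds 1) (nhds (1 * a k)) :=
        (continuous_id.mul continuous_const).tendsto 1
      simpa using this.mono_left nhdsWithin_le_nhds
    have hlogpa : Tendsto (fun P : ℝ => Real.log (P * a k)) l (nhds (Real.log (a k))) :=
      ((Real.continuousAt_log (ha k hk).ne').tendsto).comp hpa
    exact (tendsto_const_nhds.mul (hlogpa.sub hlogm)).sub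
      (tendsto_const_nhds.mul (tendsto_const_nhds.sub hlogm))
  have h1P : Tendsto (fun P : ℝ => 1 - P) l (nhdsWithin 0 (Set.Ioi 0)) := by
    rw [tendsto_nhdsWithin_iff]
    constructor
    · have : Tendsto (fun P : ℝ => 1 - P) (nhds 1) (nhds (1 - 1)) :=
        (continuous_const.sub continuous_id).tendsto 1
      simpa using this.mono_left nhdsWithin_le_nhds
    · filter_upwards [self_mem_nhdsWithin] with P (hP : P < 1)
      exact sub_pos.2 hP
  have hmain : Tendsto (fun P : ℝ => (-Real.log (1 - P)) *
      (∑ k ∈ Finset.range (N + 1), b k)) l atTop := by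
    refine Filter.Tendsto.atTop_mul_pos hSB ?_ tendsto_const_nhds
    have := Real.tendsto_log_nhdsGT_zero.comp h1P
    exact tendsto_neg_atBot_atTop.comp this
  have hg : Tendsto (fun P : ℝ => (-Real.log (1 - P)) * (∑ k ∈ Finset.range (N + 1), b k) +
      ∑ k ∈ Finset.range (N + 1),
        (a k * (Real.log (P * a k) - Real.log (P * a k + (1 - P) * b k))
          - b k * (Real.log (b k) - Real.log (P * a k + (1 - P) * b k)))) l atTop := by
    refine Filter.tendsto_atTop_add_right_of_le' l
      ((∑ k ∈ Finset.range (N + 1),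
        (a k * (Real.log (a k) - Real.log (a k)) - b k * (Real.log (b k) - Real.log (a k)))) - 1)
      hmain ?_
    exact hrem.eventually (eventually_ge_nhds (sub_one_lt _))
  have hev : ∀ᶠ P in l, 0 < phiFn N a b P ∧ P ∈ Set.Ioo (0:ℝ) 1 := by
    have hIoo : ∀ᶠ P in l, P ∈ Set.Ioo (0:ℝ) 1 := by
      have h1 : ∀ᶠ P in l, P ∈ Set.Iio (1:ℝ) := self_mem_nhdsWithin
      have h2 : ∀ᶠ P in l, (0:ℝ) < P :=
        (eventually_gt_nhds one_pos).filter_mono nhdsWithin_le_nhds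
      filter_upwards [h1, h2] with P hP1 hP2 using ⟨hP2, hP1⟩
    have hpos := hg.eventually (eventually_gt_atTop 0)
    filter_upwards [hIoo, hpos] with P h1 h2
    exact ⟨by rw [hEq P h1]; exact h2, h1⟩
  obtain ⟨v, hv1, hv2⟩ := hev.exists
  exact ⟨v, hv2, hv1⟩

lemma contOn_DeltaG {s : Set ℝ} (hs : s ⊆ Set.Ioo 0 1) : ContinuousOn (DeltaG N a b) s :=
  fun P hP => ((hasDerivAt_DeltaG ha hb (hs hP)).continuousAt).continuousWithinAt

/-- the core lemma. -/
lemma core : ∃ P ∈ Set.Ioo (0:ℝ) 1,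
    phiFn N a b P = 0 ∧ IsUniqueArgminOnIoo (DeltaG N a b) P := by
  obtain ⟨u, hu, hu0⟩ := exists_phiFn_neg ha hb
  obtain ⟨v, hv, hv0⟩ := exists_phiFn_pos ha hb
  have hmono := strictMonoOn_phiFn ha hb
  have huv : u < v := by
    by_contra h
    rcases eq_or_lt_of_le (not_lt.1 h) with h' | h'
    · rw [h'] at hv0; linarith
    · have := hmono hv hu h'
      linarith
  have hcontphi : ContinuousOn (phiFn N a b) (Set.Icc u v) := by
    intro P hP
    have hP' : P ∈ Set.Ioo (0:ℝ) 1 := ⟨lt_of_lt_of_le hu.1 hP.1, lt_of_le_of_lt hP.2 hv.2⟩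
    exact ((hasDerivAt_phiFn ha hb hP').continuousAt).continuousWithinAt
  have h0mem : (0:ℝ) ∈ Set.Ioo (phiFn N a b u) (phiFn N a b v) := ⟨hu0, hv0⟩
  obtain ⟨P, hPuv, hP0⟩ := intermediate_value_Ioo huv.le hcontphi h0mem
  have hP : P ∈ Set.Ioo (0:ℝ) 1 := ⟨lt_trans hu.1 hPuv.1, lt_trans hPuv.2 hv.2⟩
  refine ⟨P, hP, hP0, hP, fun Q hQ hQP => ?_⟩
  rcases (Ne.lt_or_gt hQP) with h | h
  · -- Q < P : DeltaG strictly decreasing on [Q, P]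
    have hsub : Set.Icc Q P ⊆ Set.Ioo (0:ℝ) 1 :=
      fun x hx => ⟨lt_of_lt_of_le hQ.1 hx.1, lt_of_le_of_lt hx.2 hP.2⟩
    have hanti : StrictAntiOn (DeltaG N a b) (Set.Icc Q P) := by
      refine strictAntiOn_of_deriv_neg (convex_Icc Q P) (contOn_DeltaG ha hb hsub) ?_
      intro x hx
      rw [interior_Icc] at hx
      have hx' : x ∈ Set.Ioo (0:ℝ) 1 := hsub ⟨hx.1.le, hx.2.le⟩
      rw [(hasDerivAt_DeltaG ha hb hx').deriv]
      have := hmono hx' hP hx.2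
      rw [hP0] at this
      exact this
    exact hanti (Set.left_mem_Icc.2 h.le) (Set.right_mem_Icc.2 h.le) h
  · -- P < Q : DeltaG strictly increasing on [P, Q]
    have hsub : Set.Icc P Q ⊆ Set.Ioo (0:ℝ) 1 :=
      fun x hx => ⟨lt_of_lt_of_le hP.1 hx.1, lt_of_le_of_lt hx.2 hQ.2⟩
    have hmono' : StrictMonoOn (DeltaG N a b) (Set.Icc P Q) := by
      refine strictMonoOn_of_deriv_pos (convex_Icc P Q) (contOn_DeltaG ha hb hsub) ?_
      intro x hx
      rw [interior_Icc] at hx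
      have hx' : x ∈ Set.Ioo (0:ℝ) 1 := hsub ⟨hx.1.le, hx.2.le⟩
      rw [(hasDerivAt_DeltaG ha hb hx').deriv]
      have := hmono hP hx' hx.1
      rw [hP0] at this
      exact this
    exact hmono' (Set.left_mem_Icc.2 h.le) (Set.right_mem_Icc.2 h.le) h

end sums

lemma binWeight_pos {N k : ℕ} {x : ℝ} (hk : k ≤ N) (hx : x ∈ Set.Ioo (0:ℝ) 1) :
    0 < binWeight N x k :=
  mul_pos (mul_pos (by exact_mod_cast Nat.choose_pos hk) (pow_pos hx.1 k))
    (pow_pos (sub_pos.2 hx.2) _)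

lemma hypWeight_pos {M K N k : ℕ} (hkN : k ≤ N) (hNK : N ≤ K) (hNMK : N ≤ M - K)
    (hKM : K ≤ M) : 0 < hypWeight M K N k := by
  have h1 : 0 < K.choose k := Nat.choose_pos (hkN.trans hNK)
  have h2 : 0 < (M - K).choose (N - k) := Nat.choose_pos ((Nat.sub_le N k).trans hNMK)
  have h3 : 0 < M.choose N := Nat.choose_pos (hNK.trans hKM)
  exact div_pos (mul_pos (by exact_mod_cast h1) (by exact_mod_cast h2)) (by exact_mod_cast h3)

lemma cast_descFactorial_prod {n r : ℕ} (h : r ≤ n) :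
    ((n.descFactorial r : ℕ) : ℝ) = ∏ j ∈ Finset.range r, ((n : ℝ) - j) := by
  rw [Nat.descFactorial_eq_prod_range, Nat.cast_prod]
  exact Finset.prod_congr rfl fun j hj =>
    Nat.cast_sub ((Finset.mem_range.1 hj).le.trans h)

lemma cast_choose_mul_factorial {n r : ℕ} (h : r ≤ n) :
    ((n.choose r : ℝ)) * (Nat.factorial r : ℝ) = ∏ j ∈ Finset.range r, ((n : ℝ) - j) := by
  rw [← cast_descFactorial_prod h, Nat.descFactorial_eq_factorial_mul_choose]
  push_cast
  ring

lemma hypWeight_eq {M K N k : ℕ} (hkN : k ≤ N) (hNK : N ≤ K) (hNMK : N ≤ M - K)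
    (hKM : K ≤ M) (hM : 0 < M) :
    hypWeight M K N k = (N.choose k : ℝ) *
      ((∏ j ∈ Finset.range k, (((K : ℝ) - j) / M)) *
        (∏ j ∈ Finset.range (N - k), (((M : ℝ) - K - j) / M)) /
        (∏ j ∈ Finset.range N, (((M : ℝ) - j) / M))) := by
  have hM0 : (M:ℝ) ≠ 0 := Nat.cast_pos.2 hM |>.ne'
  have hkK : k ≤ K := hkN.trans hNK
  have hNkMK : N - k ≤ M - K := (Nat.sub_le N k).trans hNMK
  have hNM : N ≤ M := hNK.trans hKM
  have h1 := cast_choose_mul_factorial hkK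
  have h2 := cast_choose_mul_factorial hNkMK
  have h3 := cast_choose_mul_factorial hNM
  have hMK : ((M - K : ℕ) : ℝ) = (M : ℝ) - K := Nat.cast_sub hKM
  -- rewrite the product over M-K
  have h2' : ((M - K).choose (N - k) : ℝ) * (Nat.factorial (N - k) : ℝ) =
      ∏ j ∈ Finset.range (N - k), ((M : ℝ) - K - j) := by
    rw [h2]
    exact Finset.prod_congr rfl fun j hj => by rw [hMK]
  -- products with /M
  have hprodK : ∏ j ∈ Finset.range k, (((K : ℝ) - j) / M) =
      (∏ j ∈ Finset.range k, ((K : ℝ) - j)) / M ^ k := by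
    rw [Finset.prod_div_distrib, Finset.prod_const, Finset.card_range]
  have hprodMK : ∏ j ∈ Finset.range (N - k), (((M : ℝ) - K - j) / M) =
      (∏ j ∈ Finset.range (N - k), ((M : ℝ) - K - j)) / M ^ (N - k) := by
    rw [Finset.prod_div_distrib, Finset.prod_const, Finset.card_range]
  have hprodM : ∏ j ∈ Finset.range N, (((M : ℝ) - j) / M) =
      (∏ j ∈ Finset.range N, ((M : ℝ) - j)) / M ^ N := by
    rw [Finset.prod_div_distrib, Finset.prod_const, Finset.card_range]
  have hprodMpos : 0 < ∏ j ∈ Finset.range N, ((M : ℝ) - j) := by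
    refine Finset.prod_pos fun j hj => ?_
    have : j < M := lt_of_lt_of_le (Finset.mem_range.1 hj) hNM
    have : (j : ℝ) < M := by exact_mod_cast this
    linarith
  have hpow : (M:ℝ) ^ k * (M:ℝ) ^ (N - k) = (M:ℝ) ^ N := by
    rw [← pow_add, Nat.add_sub_cancel' hkN]
  have hchoose : (N.choose k : ℝ) * (Nat.factorial k : ℝ) * (Nat.factorial (N - k) : ℝ) = (Nat.factorial N : ℝ) := by
    exact_mod_cast Nat.choose_mul_factorial_mul_factorial hkN
  have hkfac : (Nat.factorial k : ℝ) ≠ 0 := Nat.cast_ne_zero.2 (Nat.factorial_ne_zero _)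
  have hNkfac : (Nat.factorial (N - k) : ℝ) ≠ 0 := Nat.cast_ne_zero.2 (Nat.factorial_ne_zero _)
  have hNfac : (Nat.factorial N : ℝ) ≠ 0 := Nat.cast_ne_zero.2 (Nat.factorial_ne_zero _)
  have hMN : (M.choose N : ℝ) ≠ 0 :=
    Nat.cast_ne_zero.2 (Nat.choose_pos hNM).ne'
  rw [hypWeight, hprodK, hprodMK, hprodM, ← h1, ← h2', ← h3]
  have hMpow : (M:ℝ) ^ k ≠ 0 := pow_ne_zero _ hM0
  have hMpow2 : (M:ℝ) ^ (N - k) ≠ 0 := pow_ne_zero _ hM0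
  have hMpow3 : (M:ℝ) ^ N ≠ 0 := pow_ne_zero _ hM0
  field_simp
  rw [mul_assoc _ ((M:ℝ) ^ k), hpow]
  linear_combination (-(((K.choose k : ℝ)) * ((M - K).choose (N - k) : ℝ) *
    (M:ℝ) ^ N)) * hchoose

section conv

variable {M K : ℕ → ℕ} {x : ℝ}

lemma tendsto_M_real (hM : Tendsto M atTop atTop) :
    Tendsto (fun i => (M i : ℝ)) atTop atTop :=
  tendsto_natCast_atTop_atTop.comp hM

lemma tendsto_K_real (hx : x ∈ Set.Ioo (0:ℝ) 1) (hM : Tendsto M atTop atTop)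
    (hxK : Tendsto (fun i => (K i : ℝ) / (M i : ℝ)) atTop (nhds x)) :
    Tendsto (fun i => (K i : ℝ)) atTop atTop := by
  have h := Filter.Tendsto.pos_mul_atTop hx.1 hxK (tendsto_M_real hM)
  refine h.congr' ?_
  filter_upwards [hM.eventually (eventually_gt_atTop 0)] with i hi
  have : (M i : ℝ) ≠ 0 := by positivity
  field_simp

lemma tendsto_MK_real (hKM : ∀ i, K i ≤ M i) (hx : x ∈ Set.Ioo (0:ℝ) 1)
    (hM : Tendsto M atTop atTop)
    (hxK : Tendsto (fun i => (K i : ℝ) / (M i : ℝ)) atTop (nhds x)) :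
    Tendsto (fun i => (M i : ℝ) - (K i : ℝ)) atTop atTop := by
  have h := Filter.Tendsto.pos_mul_atTop (sub_pos.2 hx.2)
    (tendsto_const_nhds.sub hxK) (tendsto_M_real hM)
  refine h.congr' ?_
  filter_upwards [hM.eventually (eventually_gt_atTop 0)] with i hi
  have : (M i : ℝ) ≠ 0 := by positivity
  field_simp

lemma eventually_le_K (N : ℕ) (hx : x ∈ Set.Ioo (0:ℝ) 1) (hM : Tendsto M atTop atTop)
    (hxK : Tendsto (fun i => (K i : ℝ) / (M i : ℝ)) atTop (nhds x)) :
    ∀ᶠ i in atTop, N ≤ K i := by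
  filter_upwards [(tendsto_K_real hx hM hxK).eventually (eventually_ge_atTop (N:ℝ))] with i hi
  exact_mod_cast hi

lemma eventually_le_MK (N : ℕ) (hKM : ∀ i, K i ≤ M i) (hx : x ∈ Set.Ioo (0:ℝ) 1)
    (hM : Tendsto M atTop atTop)
    (hxK : Tendsto (fun i => (K i : ℝ) / (M i : ℝ)) atTop (nhds x)) :
    ∀ᶠ i in atTop, N ≤ M i - K i := by
  filter_upwards [(tendsto_MK_real hKM hx hM hxK).eventually
    (eventually_ge_atTop (N:ℝ))] with i hi
  have : (N : ℝ) ≤ ((M i - K i : ℕ) : ℝ) := by rw [Nat.cast_sub (hKM i)]; exact hi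
  exact_mod_cast this

lemma hyp_tendsto (N k : ℕ) (hk : k ≤ N) (hx : x ∈ Set.Ioo (0:ℝ) 1)
    (hKM : ∀ i, K i ≤ M i) (hM : Tendsto M atTop atTop)
    (hxK : Tendsto (fun i => (K i : ℝ) / (M i : ℝ)) atTop (nhds x)) :
    Tendsto (fun i => hypWeight (M i) (K i) N k) atTop (nhds (binWeight N x k)) := by
  have hMr := tendsto_M_real hM
  have hM0 : ∀ᶠ i in atTop, 0 < M i := hM.eventually (eventually_gt_atTop 0)
  -- limits of individual factors
  have hjdiv : ∀ (c : ℝ), Tendsto (fun i => c / (M i : ℝ)) atTop (nhds 0) :=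
    fun c => tendsto_const_nhds.div_atTop hMr
  have hfacK : ∀ j : ℕ, Tendsto (fun i => ((K i : ℝ) - j) / (M i : ℝ)) atTop (nhds x) := by
    intro j
    have h := hxK.sub (hjdiv j)
    rw [sub_zero] at h
    refine h.congr' ?_
    filter_upwards [hM0] with i hi
    have : (M i : ℝ) ≠ 0 := by positivity
    rw [sub_div]
  have hfacMK : ∀ j : ℕ, Tendsto (fun i => ((M i : ℝ) - (K i : ℝ) - j) / (M i : ℝ))
      atTop (nhds (1 - x)) := by
    intro j
    have h := ((tendsto_const_nhds : Tendsto (fun _ : ℕ => (1:ℝ)) atTop (nhds 1)).sub hxK).sub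
      (hjdiv j)
    rw [sub_zero] at h
    refine h.congr' ?_
    filter_upwards [hM0] with i hi
    have hne : (M i : ℝ) ≠ 0 := by positivity
    rw [sub_div, sub_div, div_self hne]
  have hfacM : ∀ j : ℕ, Tendsto (fun i => ((M i : ℝ) - j) / (M i : ℝ)) atTop (nhds 1) := by
    intro j
    have h := (tendsto_const_nhds (x := (1:ℝ))).sub (hjdiv j)
    rw [sub_zero] at h
    refine h.congr' ?_
    filter_upwards [hM0] with i hi
    have hne : (M i : ℝ) ≠ 0 := by positivity
    rw [sub_div, div_self hne]
  have hA : Tendsto (fun i => ∏ j ∈ Finset.range k, (((K i : ℝ) - j) / (M i : ℝ)))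
      atTop (nhds (x ^ k)) := by
    have := tendsto_finset_prod (Finset.range k) (fun j _ => hfacK j)
    simpa using this
  have hBf : Tendsto (fun i => ∏ j ∈ Finset.range (N - k),
      (((M i : ℝ) - (K i : ℝ) - j) / (M i : ℝ))) atTop (nhds ((1 - x) ^ (N - k))) := by
    have := tendsto_finset_prod (Finset.range (N - k)) (fun j _ => hfacMK j)
    simpa using this
  have hC : Tendsto (fun i => ∏ j ∈ Finset.range N, (((M i : ℝ) - j) / (M i : ℝ)))
      atTop (nhds 1) := by
    have := tendsto_finset_prod (Finset.range N) (fun j _ => hfacM j)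
    simpa using this
  have hlim : Tendsto (fun i => (N.choose k : ℝ) *
      ((∏ j ∈ Finset.range k, (((K i : ℝ) - j) / (M i : ℝ))) *
        (∏ j ∈ Finset.range (N - k), (((M i : ℝ) - (K i : ℝ) - j) / (M i : ℝ))) /
        (∏ j ∈ Finset.range N, (((M i : ℝ) - j) / (M i : ℝ))))) atTop
      (nhds ((N.choose k : ℝ) * (x ^ k * (1 - x) ^ (N - k) / 1))) :=
    tendsto_const_nhds.mul ((hA.mul hBf).div hC one_ne_zero)
  have hval : (N.choose k : ℝ) * (x ^ k * (1 - x) ^ (N - k) / 1) = binWeight N x k := by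
    rw [binWeight, div_one]; ring
  rw [hval] at hlim
  refine Tendsto.congr' ?_ hlim
  filter_upwards [eventually_le_K N hx hM hxK, eventually_le_MK N hKM hx hM hxK, hM0]
    with i h1 h2 h3
  exact (hypWeight_eq hk h1 h2 (hKM i) h3).symm

lemma phi_tendsto {N : ℕ} {a b : ℕ → ℝ} {ai bi : ℕ → ℕ → ℝ}
    (ha : ∀ k ∈ Finset.range (N + 1), 0 < a k) (hb : ∀ k ∈ Finset.range (N + 1), 0 < b k)
    (hai : ∀ k ∈ Finset.range (N + 1), Tendsto (fun i => ai i k) atTop (nhds (a k)))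
    (hbi : ∀ k ∈ Finset.range (N + 1), Tendsto (fun i => bi i k) atTop (nhds (b k)))
    {P : ℝ} (hP : P ∈ Set.Ioo (0:ℝ) 1) :
    Tendsto (fun i => phiFn N (ai i) (bi i) P) atTop (nhds (phiFn N a b P)) := by
  unfold phiFn
  refine tendsto_finset_sum _ fun k hk => ?_
  have hA := hai k hk
  have hB := hbi k hk
  have hm : Tendsto (fun i => P * ai i k + (1 - P) * bi i k) atTop
      (nhds (P * a k + (1 - P) * b k)) := (hA.const_mul P).add (hB.const_mul (1 - P))
  have hmpos := m_pos (ha k hk) (hb k hk) hP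
  have hlogm := ((Real.continuousAt_log hmpos.ne').tendsto).comp hm
  have hlog1 := ((Real.continuousAt_log (mul_pos hP.1 (ha k hk)).ne').tendsto).comp
    (hA.const_mul P)
  have hlog2 := ((Real.continuousAt_log (mul_pos (sub_pos.2 hP.2) (hb k hk)).ne').tendsto).comp
    (hB.const_mul (1 - P))
  exact (hA.mul (hlog1.sub hlogm)).sub (hB.mul (hlog2.sub hlogm))

end conv

end S19

/-- Convergence of the equilibrium priors of the finite Bayesian games
`𝔅𝔊(N,K_{A,i},K_{B,i},M_i)` to the equilibrium prior of the Binomial Bayesian game: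
the binomial growth-rate difference has a unique minimizer `P* ∈ (0,1)`, the
hypergeometric ones eventually have unique minimizers `P_i ∈ (0,1)`, and `P_i → P*`. -/
theorem stmt_19 (N : ℕ) (xA xB : ℝ)
    (hA : xA ∈ Set.Ioo (0:ℝ) 1) (hB : xB ∈ Set.Ioo (0:ℝ) 1)
    (M KA KB : ℕ → ℕ) (hKA : ∀ i, KA i ≤ M i) (hKB : ∀ i, KB i ≤ M i)
    (hM : Tendsto M atTop atTop)
    (hxA : Tendsto (fun i => (KA i : ℝ) / (M i : ℝ)) atTop (nhds xA))
    (hxB : Tendsto (fun i => (KB i : ℝ) / (M i : ℝ)) atTop (nhds xB)) :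
    ∃ Pstar : ℝ,
      IsUniqueArgminOnIoo (DeltaG N (binWeight N xA) (binWeight N xB)) Pstar ∧
      ∃ Pseq : ℕ → ℝ,
        (∀ᶠ i in atTop,
          IsUniqueArgminOnIoo
            (DeltaG N (hypWeight (M i) (KA i) N) (hypWeight (M i) (KB i) N)) (Pseq i)) ∧
        Tendsto Pseq atTop (nhds Pstar) := by
  classical
  have haBin : ∀ k ∈ Finset.range (N + 1), 0 < binWeight N xA k :=
    fun k hk => S19.binWeight_pos (Nat.lt_succ_iff.1 (Finset.mem_range.1 hk)) hA
  have hbBin : ∀ k ∈ Finset.range (N + 1), 0 < binWeight N xB k :=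
    fun k hk => S19.binWeight_pos (Nat.lt_succ_iff.1 (Finset.mem_range.1 hk)) hB
  obtain ⟨Pstar, hPs, hroot, hmin⟩ := S19.core haBin hbBin
  have hmono := S19.strictMonoOn_phiFn haBin hbBin
  have hposA : ∀ᶠ i in atTop, ∀ k ∈ Finset.range (N + 1),
      0 < hypWeight (M i) (KA i) N k := by
    filter_upwards [S19.eventually_le_K N hA hM hxA,
      S19.eventually_le_MK N hKA hA hM hxA] with i h1 h2 k hk
    exact S19.hypWeight_pos (Nat.lt_succ_iff.1 (Finset.mem_range.1 hk)) h1 h2 (hKA i)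
  have hposB : ∀ᶠ i in atTop, ∀ k ∈ Finset.range (N + 1),
      0 < hypWeight (M i) (KB i) N k := by
    filter_upwards [S19.eventually_le_K N hB hM hxB,
      S19.eventually_le_MK N hKB hB hM hxB] with i h1 h2 k hk
    exact S19.hypWeight_pos (Nat.lt_succ_iff.1 (Finset.mem_range.1 hk)) h1 h2 (hKB i)
  have htA : ∀ k ∈ Finset.range (N + 1),
      Tendsto (fun i => hypWeight (M i) (KA i) N k) atTop (nhds (binWeight N xA k)) :=
    fun k hk => S19.hyp_tendsto N k (Nat.lt_succ_iff.1 (Finset.mem_range.1 hk)) hA hKA hM hxA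
  have htB : ∀ k ∈ Finset.range (N + 1),
      Tendsto (fun i => hypWeight (M i) (KB i) N k) atTop (nhds (binWeight N xB k)) :=
    fun k hk => S19.hyp_tendsto N k (Nat.lt_succ_iff.1 (Finset.mem_range.1 hk)) hB hKB hM hxB
  let q : ℕ → ℝ := fun i =>
    if h : ∃ P ∈ Set.Ioo (0:ℝ) 1,
        S19.phiFn N (hypWeight (M i) (KA i) N) (hypWeight (M i) (KB i) N) P = 0 ∧
        IsUniqueArgminOnIoo
          (DeltaG N (hypWeight (M i) (KA i) N) (hypWeight (M i) (KB i) N)) P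
    then h.choose else 1 / 2
  have hGood : ∀ᶠ i in atTop,
      q i ∈ Set.Ioo (0:ℝ) 1 ∧
      S19.phiFn N (hypWeight (M i) (KA i) N) (hypWeight (M i) (KB i) N) (q i) = 0 ∧
      IsUniqueArgminOnIoo
        (DeltaG N (hypWeight (M i) (KA i) N) (hypWeight (M i) (KB i) N)) (q i) := by
    filter_upwards [hposA, hposB] with i h1 h2
    have hex : ∃ P ∈ Set.Ioo (0:ℝ) 1,
        S19.phiFn N (hypWeight (M i) (KA i) N) (hypWeight (M i) (KB i) N) P = 0 ∧
        IsUniqueArgminOnIoo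
          (DeltaG N (hypWeight (M i) (KA i) N) (hypWeight (M i) (KB i) N)) P :=
      S19.core h1 h2
    have hq : q i = hex.choose := dif_pos hex
    obtain ⟨hm1, hm2, hm3⟩ := hex.choose_spec
    rw [hq]
    exact ⟨hm1, hm2, hm3⟩
  refine ⟨Pstar, hmin, q, hGood.mono fun i h => h.2.2, ?_⟩
  rw [tendsto_order]
  constructor
  · intro c hc
    set u : ℝ := max c (Pstar / 2) with hu_def
    have hu : u ∈ Set.Ioo (0:ℝ) 1 :=
      ⟨lt_max_of_lt_right (by linarith [hPs.1]),
        max_lt (hc.trans hPs.2) (by linarith [hPs.1, hPs.2])⟩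
    have huP : u < Pstar := max_lt hc (by linarith [hPs.1])
    have hphiu : S19.phiFn N (binWeight N xA) (binWeight N xB) u < 0 := by
      have := hmono hu hPs huP
      rw [hroot] at this
      exact this
    have hconv := S19.phi_tendsto haBin hbBin htA htB hu
    have hev := hconv.eventually_lt_const hphiu
    filter_upwards [hGood, hposA, hposB, hev] with i hg h1 h2 h3
    by_contra hcon
    push_neg at hcon
    have hqu : q i ≤ u := le_trans hcon (le_max_left _ _)
    have hmono_i := S19.strictMonoOn_phiFn h1 h2
    rcases hqu.lt_or_eq with h | h
    · have := hmono_i hg.1 hu h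
      rw [hg.2.1] at this
      linarith
    · rw [← h] at h3
      rw [hg.2.1] at h3
      linarith
  · intro c hc
    set v : ℝ := min c ((Pstar + 1) / 2) with hv_def
    have hv : v ∈ Set.Ioo (0:ℝ) 1 :=
      ⟨lt_min (hPs.1.trans hc) (by linarith [hPs.1]),
        min_lt_of_right_lt (by linarith [hPs.2])⟩
    have hPv : Pstar < v := lt_min hc (by linarith [hPs.2])
    have hphiv : 0 < S19.phiFn N (binWeight N xA) (binWeight N xB) v := by
      have := hmono hPs hv hPv
      rw [hroot] at this
      exact this
    have hconv := S19.phi_tendsto haBin hbBin htA htB hv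
    have hev := hconv.eventually_const_lt hphiv
    filter_upwards [hGood, hposA, hposB, hev] with i hg h1 h2 h3
    by_contra hcon
    push_neg at hcon
    have hvq : v ≤ q i := le_trans (min_le_left _ _) hcon
    have hmono_i := S19.strictMonoOn_phiFn h1 h2
    rcases hvq.lt_or_eq with h | h
    · have := hmono_i hv hg.1 h
      rw [hg.2.1] at this
      linarith
    · rw [h] at h3
      rw [hg.2.1] at h3
      linarith
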